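/- arXiv:1812.08242 — 3 statements merged into one kernel-verified Lean document; each statement's English description precedes it below -/
import Mathlib

section
/- Assume V is symmetric positive definite with the completeness property and the square roots ω_1,…,ω_n of its eigenvalues are linearly independent over ℚ, and J satisfies Condition 2. For t_1,…,t_m ≥ 0 and u_1,…,u_m ∈ O_ξ define iteratively J_1(t_1,u_1;ψ) = J_L(u_1; e^{t_1 A}ψ) and J_m(t_1,u_1,…,t_m,u_m;ψ) = J_L(u_m; e^{t_m A} J_{m−1}(t_1,u_1,…,t_{m−1},u_{m−1};ψ)). Then there exists an integer m ≥ 1 such that for every ψ ∈ L the reachable set 𝒥_m(ψ) = {J_m(t_1,u_1,…,t_m,u_m;ψ) : t_i ≥ 0, u_i ∈ O_ξ} equals all of L. -/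
open Matrix MeasureTheory

/-- Index for the coordinates of one block (particle `i`, component `j`). -/
abbrev PIdx (N d : ℕ) := Fin N × Fin d

/-- The phase space `L = ℝ^{2n}`, `n = dN`: positions indexed by `Sum.inl`, momenta by
`Sum.inr`. -/
abbrev Phase (N d : ℕ) := (PIdx N d ⊕ PIdx N d) → ℝ

/-- The Hamiltonian matrix `A = [[0, (1/M)I], [−V, 0]]`. -/
noncomputable def hamMatrix {N d : ℕ} (M : ℝ) (V : Matrix (PIdx N d) (PIdx N d) ℝ) :
    Matrix (PIdx N d ⊕ PIdx N d) (PIdx N d ⊕ PIdx N d) ℝ :=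
  Matrix.fromBlocks 0 ((1 / M) • 1) (-V) 0

/-- The momentum `p₁ ∈ ℝ^d` of particle 1. -/
def mom1 {N d : ℕ} (hN : 0 < N) (ψ : Phase N d) : Fin d → ℝ :=
  fun j => ψ (Sum.inr ((⟨0, hN⟩ : Fin N), j))

/-- The collision map on phase space: `J_L(u;(q,p)) = (q,p')` with `p'₁ = J(u,p₁)` and
`p'ᵢ = pᵢ` for `i > 1`. -/
def JL {N d l : ℕ} (hN : 0 < N) (J : (Fin l → ℝ) → (Fin d → ℝ) → (Fin d → ℝ))
    (u : Fin l → ℝ) (ψ : Phase N d) : Phase N d := fun z =>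
  match z with
  | Sum.inl x => ψ (Sum.inl x)
  | Sum.inr x => if x.1 = (⟨0, hN⟩ : Fin N) then J u (mom1 hN ψ) x.2 else ψ (Sum.inr x)

/-- The iterated collision maps: `J_0(ψ) = ψ` and
`J_{m+1}(t_0,u_0,…,t_m,u_m; ψ) = J_L(u_m; e^{t_m A} J_m(t_0,u_0,…;ψ))`. -/
noncomputable def Jiter {N d l : ℕ} (hN : 0 < N) (M : ℝ)
    (V : Matrix (PIdx N d) (PIdx N d) ℝ)
    (J : (Fin l → ℝ) → (Fin d → ℝ) → (Fin d → ℝ))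
    (ts : ℕ → ℝ) (us : ℕ → Fin l → ℝ) (ψ : Phase N d) : ℕ → Phase N d
  | 0 => ψ
  | m + 1 =>
      JL hN J (us m)
        ((NormedSpace.exp (ts m • hamMatrix M V)).mulVec (Jiter hN M V J ts us ψ m))

namespace SC

variable {N d l : ℕ}

lemma teleG (G : ℕ → ℝ) : ∀ b a : ℕ, 1 ≤ a → a ≤ b →
    ∑ j ∈ Finset.Ico a b, (G (j-1) - G j) = G (a-1) - G (b-1) := by
  intro b
  induction b with
  | zero => intro a h1 h2; omega
  | succ b ih =>
      intro a h1 h2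
      rcases Nat.lt_or_ge a (b+1) with h | h
      · have hab : a ≤ b := by omega
        rw [Finset.sum_Ico_succ_top hab, ih a h1 hab]
        have : b + 1 - 1 = b := rfl
        rw [this]
        ring
      · have : a = b + 1 := by omega
        subst this
        simp

noncomputable def flow (M : ℝ) (V : Matrix (PIdx N d) (PIdx N d) ℝ) (t : ℝ) (ψ : Phase N d) :
    Phase N d := (NormedSpace.exp (t • hamMatrix M V)).mulVec ψ

lemma flow_zero (M : ℝ) (V : Matrix (PIdx N d) (PIdx N d) ℝ) (ψ : Phase N d) :
    flow M V 0 ψ = ψ := by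
  simp [flow, NormedSpace.exp_zero, Matrix.one_mulVec]

lemma flow_flow (M : ℝ) (V : Matrix (PIdx N d) (PIdx N d) ℝ) (s t : ℝ) (ψ : Phase N d) :
    flow M V s (flow M V t ψ) = flow M V (s + t) ψ := by
  rw [flow, flow, flow, Matrix.mulVec_mulVec, add_smul, Matrix.exp_add_of_commute]
  exact ((Commute.refl (hamMatrix M V)).smul_left s).smul_right t

lemma flow_add_smul (M : ℝ) (V : Matrix (PIdx N d) (PIdx N d) ℝ) (t : ℝ) (x y : Phase N d)
    (c : ℝ) : flow M V t (x + c • y) = flow M V t x + c • flow M V t y := by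
  simp [flow, Matrix.mulVec_add, Matrix.mulVec_smul]

lemma hasDerivAt_flow (M : ℝ) (V : Matrix (PIdx N d) (PIdx N d) ℝ) (ψ : Phase N d) (t : ℝ) :
    HasDerivAt (fun s => flow M V s ψ) ((hamMatrix M V).mulVec (flow M V t ψ)) t := by
  letI : SeminormedRing (Matrix (PIdx N d ⊕ PIdx N d) (PIdx N d ⊕ PIdx N d) ℝ) :=
    Matrix.linftyOpSemiNormedRing
  letI : NormedRing (Matrix (PIdx N d ⊕ PIdx N d) (PIdx N d ⊕ PIdx N d) ℝ) :=
    Matrix.linftyOpNormedRing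
  letI : NormedAlgebra ℝ (Matrix (PIdx N d ⊕ PIdx N d) (PIdx N d ⊕ PIdx N d) ℝ) :=
    Matrix.linftyOpNormedAlgebra
  have h := hasDerivAt_exp_smul_const' (𝕂 := ℝ) (hamMatrix M V) t
  let L : Matrix (PIdx N d ⊕ PIdx N d) (PIdx N d ⊕ PIdx N d) ℝ →ₗ[ℝ] Phase N d :=
    { toFun := fun B => B.mulVec ψ
      map_add' := fun a b => Matrix.add_mulVec a b ψ
      map_smul' := fun c a => Matrix.smul_mulVec c a ψ }
  have h2 := (L.toContinuousLinearMap.hasFDerivAt).comp_hasDerivAt t h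
  have : L.toContinuousLinearMap (hamMatrix M V * NormedSpace.exp (t • hamMatrix M V)) =
      (hamMatrix M V).mulVec (flow M V t ψ) := by
    show (hamMatrix M V * NormedSpace.exp (t • hamMatrix M V)).mulVec ψ = _
    rw [flow, Matrix.mulVec_mulVec]
  replace h2 := h2.congr_deriv this
  exact h2

def inlV (x : PIdx N d → ℝ) : Phase N d := Sum.elim x (fun _ => 0)
def inrV (x : PIdx N d → ℝ) : Phase N d := Sum.elim (fun _ => 0) x

lemma ham_mulVec_inl (M : ℝ) (V : Matrix (PIdx N d) (PIdx N d) ℝ) (x : PIdx N d → ℝ) :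
    (hamMatrix M V).mulVec (inlV x) = inrV ((-V).mulVec x) := by
  funext z
  cases z with
  | inl i =>
      simp [hamMatrix, inlV, inrV, Matrix.mulVec, dotProduct, Fintype.sum_sum_type]
  | inr i =>
      simp [hamMatrix, inlV, inrV, Matrix.mulVec, dotProduct, Fintype.sum_sum_type]

lemma ham_mulVec_inr (M : ℝ) (V : Matrix (PIdx N d) (PIdx N d) ℝ) (y : PIdx N d → ℝ) :
    (hamMatrix M V).mulVec (inrV y) = inlV ((1 / M) • y) := by
  funext z
  cases z with
  | inl i =>
      simp [hamMatrix, inlV, inrV, Matrix.mulVec, dotProduct, Fintype.sum_sum_type,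
        Matrix.one_apply, mul_ite, Finset.sum_ite_eq']
  | inr i =>
      simp [hamMatrix, inlV, inrV, Matrix.mulVec, dotProduct, Fintype.sum_sum_type]

lemma ham_pow_even (M : ℝ) (V : Matrix (PIdx N d) (PIdx N d) ℝ) (y : PIdx N d → ℝ) (k : ℕ) :
    ((hamMatrix M V) ^ (2 * k)).mulVec (inrV y) = inrV ((((-(1/M)) • V) ^ k).mulVec y) := by
  induction k generalizing y with
  | zero => simp
  | succ k ih =>
      have h2 : 2 * (k + 1) = 2 * k + 1 + 1 := by ring
      have harg : (-V).mulVec ((1 / M) • y) = ((-(1/M)) • V).mulVec y := by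
        rw [Matrix.mulVec_smul, Matrix.neg_mulVec, Matrix.smul_mulVec]
        simp [neg_smul, smul_neg]
      rw [h2, pow_succ, pow_succ, ← Matrix.mulVec_mulVec, ← Matrix.mulVec_mulVec,
        ham_mulVec_inr, ham_mulVec_inl, harg, ih]
      congr 1
      rw [Matrix.mulVec_mulVec, ← pow_succ]

lemma ham_pow_odd (M : ℝ) (V : Matrix (PIdx N d) (PIdx N d) ℝ) (y : PIdx N d → ℝ) (k : ℕ) :
    ((hamMatrix M V) ^ (2 * k + 1)).mulVec (inrV y) =
      inlV ((1 / M) • ((((-(1/M)) • V) ^ k).mulVec y)) := by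
  rw [pow_succ', ← Matrix.mulVec_mulVec, ham_pow_even, ham_mulVec_inr]

def inlL : (PIdx N d → ℝ) →ₗ[ℝ] Phase N d where
  toFun := inlV
  map_add' a b := by funext z; cases z <;> simp [inlV]
  map_smul' c a := by funext z; cases z <;> simp [inlV]

def inrL : (PIdx N d → ℝ) →ₗ[ℝ] Phase N d where
  toFun := inrV
  map_add' a b := by funext z; cases z <;> simp [inrV]
  map_smul' c a := by funext z; cases z <;> simp [inrV]


lemma inlV_add (a b : PIdx N d → ℝ) : inlV (a + b) = inlV a + inlV b := by
  funext z; cases z <;> simp [inlV]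
lemma inrV_add (a b : PIdx N d → ℝ) : inrV (a + b) = inrV a + inrV b := by
  funext z; cases z <;> simp [inrV]
lemma inlV_smul (c : ℝ) (a : PIdx N d → ℝ) : inlV (c • a) = c • inlV a := by
  funext z; cases z <;> simp [inlV]
lemma inrV_smul (c : ℝ) (a : PIdx N d → ℝ) : inrV (c • a) = c • inrV a := by
  funext z; cases z <;> simp [inrV]
lemma inlV_zero : inlV (0 : PIdx N d → ℝ) = 0 := by
  funext z; cases z <;> simp [inlV]
lemma inrV_zero : inrV (0 : PIdx N d → ℝ) = 0 := by
  funext z; cases z <;> simp [inrV]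

lemma kalman (hN : 0 < N) (hd : 0 < d) (M : ℝ) (hM : 0 < M)
    (V : Matrix (PIdx N d) (PIdx N d) ℝ)
    (hcompl : Submodule.span ℝ
        (Set.range fun k : ℕ =>
          (V ^ k).mulVec (Pi.single ((⟨0, hN⟩ : Fin N), (⟨0, hd⟩ : Fin d)) 1)) = ⊤) :
    Submodule.span ℝ (Set.range fun k : ℕ =>
      ((hamMatrix M V) ^ k).mulVec
        (inrV (Pi.single ((⟨0, hN⟩ : Fin N), (⟨0, hd⟩ : Fin d)) 1))) = ⊤ := by
  set e₁ : PIdx N d → ℝ := Pi.single ((⟨0, hN⟩ : Fin N), (⟨0, hd⟩ : Fin d)) 1 with he₁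
  set A := hamMatrix M V with hA
  set S := Submodule.span ℝ (Set.range fun k : ℕ => (A ^ k).mulVec (inrV e₁)) with hS
  have hMne : (1 / M) ≠ 0 := by positivity
  have hcne : ∀ k : ℕ, ((-(1/M)) ^ k : ℝ) ≠ 0 := fun k => pow_ne_zero _ (by simpa using hMne)
  have hWpow : ∀ k : ℕ, (((-(1/M)) • V) ^ k).mulVec e₁ = ((-(1/M)) ^ k : ℝ) • (V ^ k).mulVec e₁ := by
    intro k
    rw [smul_pow, Matrix.smul_mulVec]
  -- generators in each block
  have hgenr : ∀ k : ℕ, inrV ((V ^ k).mulVec e₁) ∈ S := by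
    intro k
    have h1 : (A ^ (2 * k)).mulVec (inrV e₁) ∈ S :=
      Submodule.subset_span ⟨2 * k, rfl⟩
    rw [ham_pow_even, hWpow, inrV_smul] at h1
    have := S.smul_mem (((-(1/M)) ^ k : ℝ))⁻¹ h1
    rwa [smul_smul, inv_mul_cancel₀ (hcne k), one_smul] at this
  have hgenl : ∀ k : ℕ, inlV ((V ^ k).mulVec e₁) ∈ S := by
    intro k
    have h1 : (A ^ (2 * k + 1)).mulVec (inrV e₁) ∈ S :=
      Submodule.subset_span ⟨2 * k + 1, rfl⟩
    rw [ham_pow_odd, hWpow, smul_smul, inlV_smul] at h1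
    have := S.smul_mem ((1 / M * (-(1/M)) ^ k : ℝ))⁻¹ h1
    rwa [smul_smul, inv_mul_cancel₀ (mul_ne_zero hMne (hcne k)), one_smul] at this
  have hr : ∀ x : PIdx N d → ℝ, inrV x ∈ S := by
    intro x
    have hx : x ∈ Submodule.span ℝ (Set.range fun k : ℕ => (V ^ k).mulVec e₁) := by
      rw [hcompl]; trivial
    refine Submodule.span_induction ?_ ?_ ?_ ?_ hx
    · rintro y ⟨k, rfl⟩; exact hgenr k
    · rw [inrV_zero]; exact S.zero_mem
    · intro a b _ _ ha hb; rw [inrV_add]; exact S.add_mem ha hb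
    · intro c a _ ha
      rw [inrV_smul]; exact S.smul_mem c ha
  have hl : ∀ x : PIdx N d → ℝ, inlV x ∈ S := by
    intro x
    have hx : x ∈ Submodule.span ℝ (Set.range fun k : ℕ => (V ^ k).mulVec e₁) := by
      rw [hcompl]; trivial
    refine Submodule.span_induction ?_ ?_ ?_ ?_ hx
    · rintro y ⟨k, rfl⟩; exact hgenl k
    · rw [inlV_zero]; exact S.zero_mem
    · intro a b _ _ ha hb; rw [inlV_add]; exact S.add_mem ha hb
    · intro c a _ ha
      rw [inlV_smul]; exact S.smul_mem c ha
  rw [eq_top_iff]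
  intro v _
  have hsplit : v = inlV (fun i => v (Sum.inl i)) + inrV (fun i => v (Sum.inr i)) := by
    funext z; cases z <;> simp [inlV, inrV]
  rw [hsplit]
  exact S.add_mem (hl _) (hr _)

lemma flow_span_top (M : ℝ) (V : Matrix (PIdx N d) (PIdx N d) ℝ) (b : Phase N d)
    (hk : Submodule.span ℝ (Set.range fun k : ℕ => ((hamMatrix M V) ^ k).mulVec b) = ⊤) :
    Submodule.span ℝ {x | ∃ t : ℝ, 0 ≤ t ∧ x = flow M V t b} = ⊤ := by
  set A := hamMatrix M V with hA
  set S := Submodule.span ℝ {x | ∃ t : ℝ, 0 ≤ t ∧ x = flow M V t b} with hS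
  have hclosed : IsClosed (S : Set (Phase N d)) := S.closed_of_finiteDimensional
  have key : ∀ k : ℕ, ∀ t : ℝ, 0 ≤ t → (A ^ k).mulVec (flow M V t b) ∈ S := by
    intro k
    induction k with
    | zero =>
        intro t ht
        have hmem : flow M V t b ∈ S := Submodule.subset_span ⟨t, ht, rfl⟩
        simpa [Matrix.one_mulVec] using hmem
    | succ k ih =>
        intro t ht
        have hderiv : HasDerivAt (fun s => (A ^ k).mulVec (flow M V s b))
            ((A ^ (k + 1)).mulVec (flow M V t b)) t := by
          have h1 := ((Matrix.mulVecLin (A ^ k)).toContinuousLinearMap.hasFDerivAt).comp_hasDerivAt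
            t (hasDerivAt_flow M V b t)
          have h2 : (Matrix.mulVecLin (A ^ k)).toContinuousLinearMap (A.mulVec (flow M V t b)) =
              (A ^ (k + 1)).mulVec (flow M V t b) := by
            show (A ^ k).mulVec (A.mulVec (flow M V t b)) = _
            rw [Matrix.mulVec_mulVec, ← pow_succ]
          rw [h2] at h1
          exact h1
        have hW := hderiv.hasDerivWithinAt (s := Set.Ioi t)
        rw [hasDerivWithinAt_iff_tendsto_slope] at hW
        have hset : Set.Ioi t \ {t} = Set.Ioi t :=
          Set.diff_singleton_eq_self (by simp)
        rw [hset] at hW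
        refine hclosed.mem_of_tendsto hW ?_
        filter_upwards [self_mem_nhdsWithin] with y hy
        have hy' : (0:ℝ) ≤ y := le_trans ht (le_of_lt hy)
        exact S.smul_mem _ (S.sub_mem (ih y hy') (ih t ht))
  rw [eq_top_iff, ← hk, Submodule.span_le]
  rintro x ⟨k, rfl⟩
  have := key k 0 le_rfl
  rwa [flow_zero] at this

lemma exists_fin_span {s : Set (Phase N d)} (h : Submodule.span ℝ s = ⊤) :
    ∃ (n : ℕ) (v : Fin n → Phase N d), (∀ i, v i ∈ s) ∧
      Submodule.span ℝ (Set.range v) = ⊤ := by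
  obtain ⟨b, hbs, hspan, hli⟩ := exists_linearIndependent ℝ s
  have hfin : b.Finite := hli.setFinite
  refine ⟨hfin.toFinset.card, fun i => (hfin.toFinset.equivFin.symm i : Phase N d), ?_, ?_⟩
  · intro i
    exact hbs (hfin.mem_toFinset.mp (hfin.toFinset.equivFin.symm i).2)
  · have hrange : Set.range (fun i => (hfin.toFinset.equivFin.symm i : Phase N d)) = b := by
      ext x
      constructor
      · rintro ⟨i, rfl⟩; exact hfin.mem_toFinset.mp (hfin.toFinset.equivFin.symm i).2
      · intro hx
        refine ⟨hfin.toFinset.equivFin ⟨x, hfin.mem_toFinset.mpr hx⟩, by simp⟩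
    rw [hrange, hspan, h]

def unitd (hd : 0 < d) : Fin d → ℝ := Pi.single (⟨0, hd⟩ : Fin d) 1

def unitPhase {N d : ℕ} (hN : 0 < N) (hd : 0 < d) : Phase N d :=
  inrV (Pi.single ((⟨0, hN⟩ : Fin N), (⟨0, hd⟩ : Fin d)) 1)

def setP1 (hN : 0 < N) (v : Fin d → ℝ) (χ : Phase N d) : Phase N d := fun z =>
  match z with
  | Sum.inl x => χ (Sum.inl x)
  | Sum.inr x => if x.1 = (⟨0, hN⟩ : Fin N) then v x.2 else χ (Sum.inr x)

lemma mom1_JL (hN : 0 < N) (J : (Fin l → ℝ) → (Fin d → ℝ) → (Fin d → ℝ)) (u : Fin l → ℝ)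
    (χ : Phase N d) : mom1 hN (JL hN J u χ) = J u (mom1 hN χ) := by
  funext j; simp [mom1, JL]

lemma JL_JL (hN : 0 < N) (J : (Fin l → ℝ) → (Fin d → ℝ) → (Fin d → ℝ)) (u₁ u₂ : Fin l → ℝ)
    (χ : Phase N d) (v : Fin d → ℝ) (hv : J u₂ (J u₁ (mom1 hN χ)) = v) :
    JL hN J u₂ (JL hN J u₁ χ) = setP1 hN v χ := by
  funext z
  cases z with
  | inl x => rfl
  | inr x =>
      show (if x.1 = (⟨0, hN⟩ : Fin N) then J u₂ (mom1 hN (JL hN J u₁ χ)) x.2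
        else (JL hN J u₁ χ) (Sum.inr x)) =
        (if x.1 = (⟨0, hN⟩ : Fin N) then v x.2 else χ (Sum.inr x))
      by_cases hx : x.1 = (⟨0, hN⟩ : Fin N)
      · rw [if_pos hx, if_pos hx, mom1_JL, hv]
      · rw [if_neg hx, if_neg hx]
        show (if x.1 = (⟨0, hN⟩ : Fin N) then J u₁ (mom1 hN χ) x.2 else χ (Sum.inr x)) = _
        rw [if_neg hx]

lemma setP1_mom1_self (hN : 0 < N) (φ : Phase N d) : setP1 hN (mom1 hN φ) φ = φ := by
  funext z
  cases z with
  | inl x => rfl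
  | inr x =>
      show (if x.1 = (⟨0, hN⟩ : Fin N) then mom1 hN φ x.2 else φ (Sum.inr x)) = φ (Sum.inr x)
      by_cases hx : x.1 = (⟨0, hN⟩ : Fin N)
      · rw [if_pos hx, mom1, ← hx]
      · rw [if_neg hx]

lemma setP1_mom1_add (hN : 0 < N) (hd : 0 < d) (χ : Phase N d) (c : ℝ) :
    setP1 hN (mom1 hN χ + c • unitd hd) χ = χ + c • unitPhase hN hd := by
  funext z
  cases z with
  | inl x =>
      show χ (Sum.inl x) = χ (Sum.inl x) + c • (0:ℝ)
      simp
  | inr x =>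
      show (if x.1 = (⟨0, hN⟩ : Fin N) then
          (mom1 hN χ + c • unitd hd) x.2 else χ (Sum.inr x)) =
        χ (Sum.inr x) + c • unitPhase hN hd (Sum.inr x)
      have hup : unitPhase hN hd (Sum.inr x) =
          if x = ((⟨0, hN⟩ : Fin N), (⟨0, hd⟩ : Fin d)) then (1:ℝ) else 0 := by
        simp [unitPhase, inrV, Pi.single_apply]
      by_cases hx : x.1 = (⟨0, hN⟩ : Fin N)
      · rw [if_pos hx]
        have hxx : x = (x.1, x.2) := rfl
        have h1 : mom1 hN χ x.2 = χ (Sum.inr x) := by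
          rw [mom1, hxx, hx]
        have h2 : unitd hd x.2 = unitPhase hN hd (Sum.inr x) := by
          rw [hup, unitd, Pi.single_apply]
          congr 1
          simp [Prod.ext_iff, hx]
        simp only [Pi.add_apply, Pi.smul_apply, h1, h2, smul_eq_mul]
      · rw [if_neg hx]
        have h2 : unitPhase hN hd (Sum.inr x) = 0 := by
          rw [hup, if_neg]
          intro hcon
          exact hx (by rw [hcon])
        simp [h2]

lemma Jiter_succ (hN : 0 < N) (M : ℝ) (V : Matrix (PIdx N d) (PIdx N d) ℝ)
    (J : (Fin l → ℝ) → (Fin d → ℝ) → (Fin d → ℝ)) (ts : ℕ → ℝ) (us : ℕ → Fin l → ℝ)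
    (ψ : Phase N d) (m : ℕ) :
    Jiter hN M V J ts us ψ (m + 1) =
      JL hN J (us m) (flow M V (ts m) (Jiter hN M V J ts us ψ m)) := rfl

lemma Jiter_congr (hN : 0 < N) (M : ℝ) (V : Matrix (PIdx N d) (PIdx N d) ℝ)
    (J : (Fin l → ℝ) → (Fin d → ℝ) → (Fin d → ℝ)) (ts ts' : ℕ → ℝ) (us us' : ℕ → Fin l → ℝ)
    (ψ : Phase N d) (m : ℕ) (hts : ∀ i < m, ts i = ts' i) (hus : ∀ i < m, us i = us' i) :
    Jiter hN M V J ts us ψ m = Jiter hN M V J ts' us' ψ m := by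
  induction m with
  | zero => rfl
  | succ m ih =>
      rw [Jiter_succ, Jiter_succ, hts m (Nat.lt_succ_self m), hus m (Nat.lt_succ_self m),
        ih (fun i hi => hts i (hi.trans (Nat.lt_succ_self m)))
          (fun i hi => hus i (hi.trans (Nat.lt_succ_self m)))]

lemma Jiter_add (hN : 0 < N) (M : ℝ) (V : Matrix (PIdx N d) (PIdx N d) ℝ)
    (J : (Fin l → ℝ) → (Fin d → ℝ) → (Fin d → ℝ)) (ts : ℕ → ℝ) (us : ℕ → Fin l → ℝ)
    (ψ : Phase N d) (a b : ℕ) :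
    Jiter hN M V J ts us ψ (a + b) =
      Jiter hN M V J (fun i => ts (a + i)) (fun i => us (a + i))
        (Jiter hN M V J ts us ψ a) b := by
  induction b with
  | zero => rfl
  | succ b ih =>
      show Jiter hN M V J ts us ψ ((a + b) + 1) = _
      rw [Jiter_succ, Jiter_succ, ih]

def Reach (hN : 0 < N) (M : ℝ) (V : Matrix (PIdx N d) (PIdx N d) ℝ)
    (J : (Fin l → ℝ) → (Fin d → ℝ) → (Fin d → ℝ)) (Oξ : Set (Fin l → ℝ))
    (m : ℕ) (ψ φ : Phase N d) : Prop :=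
  ∃ (ts : ℕ → ℝ) (us : ℕ → Fin l → ℝ),
    (∀ i, 0 ≤ ts i) ∧ (∀ i, us i ∈ Oξ) ∧ Jiter hN M V J ts us ψ m = φ

lemma Reach.trans {hN : 0 < N} {M : ℝ} {V : Matrix (PIdx N d) (PIdx N d) ℝ}
    {J : (Fin l → ℝ) → (Fin d → ℝ) → (Fin d → ℝ)} {Oξ : Set (Fin l → ℝ)}
    {a b : ℕ} {ψ χ φ : Phase N d} (h₁ : Reach hN M V J Oξ a ψ χ)
    (h₂ : Reach hN M V J Oξ b χ φ) : Reach hN M V J Oξ (a + b) ψ φ := by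
  obtain ⟨ts₁, us₁, hts₁, hus₁, he₁⟩ := h₁
  obtain ⟨ts₂, us₂, hts₂, hus₂, he₂⟩ := h₂
  refine ⟨fun i => if i < a then ts₁ i else ts₂ (i - a),
    fun i => if i < a then us₁ i else us₂ (i - a), ?_, ?_, ?_⟩
  · intro i; by_cases h : i < a <;> simp [h, hts₁ i, hts₂ (i - a)]
  · intro i; by_cases h : i < a <;> simp [h, hus₁ i, hus₂ (i - a)]
  · rw [Jiter_add]
    have e1 : Jiter hN M V J (fun i => if i < a then ts₁ i else ts₂ (i - a))
        (fun i => if i < a then us₁ i else us₂ (i - a)) ψ a = χ :=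
      (Jiter_congr hN M V J _ ts₁ _ us₁ ψ a (fun i hi => if_pos hi)
        (fun i hi => if_pos hi)).trans he₁
    rw [e1]
    have hts' : (fun i => if a + i < a then ts₁ (a + i) else ts₂ (a + i - a)) = ts₂ := by
      funext i
      rw [if_neg (by omega), Nat.add_sub_cancel_left]
    have hus' : (fun i => if a + i < a then us₁ (a + i) else us₂ (a + i - a)) = us₂ := by
      funext i
      rw [if_neg (by omega), Nat.add_sub_cancel_left]
    rw [hts', hus', he₂]

section Main
variable (hN : 0 < N) (hd : 0 < d) (M : ℝ) (V : Matrix (PIdx N d) (PIdx N d) ℝ)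
  (J : (Fin l → ℝ) → (Fin d → ℝ) → (Fin d → ℝ)) (Oξ : Set (Fin l → ℝ))
  (hJsphere : ∀ p x : Fin d → ℝ, (∑ j, x j ^ 2) = (∑ j, p j ^ 2) → ∃ g ∈ Oξ, J g p = x)
  (hJlevel : ∀ p : Fin d → ℝ, ∀ h : ℝ, 0 ≤ h → ∃ g ∈ Oξ, (∑ j, J g p j ^ 2) = h ^ 2)

include hJsphere hJlevel in
lemma reach_two (ψ : Phase N d) (v : Fin d → ℝ) (t : ℝ) (ht : 0 ≤ t) :
    Reach hN M V J Oξ 2 ψ (setP1 hN v (flow M V t ψ)) := by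
  obtain ⟨g₁, hg₁, he⟩ := hJlevel (mom1 hN (flow M V t ψ)) (Real.sqrt (∑ j, v j ^ 2))
    (Real.sqrt_nonneg _)
  have hsq : Real.sqrt (∑ j, v j ^ 2) ^ 2 = ∑ j, v j ^ 2 := Real.sq_sqrt (by positivity)
  obtain ⟨g₂, hg₂, hJv⟩ := hJsphere (J g₁ (mom1 hN (flow M V t ψ))) v (by rw [he, hsq])
  refine ⟨fun i => if i = 0 then t else 0, fun i => if i = 0 then g₁ else g₂, ?_, ?_, ?_⟩
  · intro i; by_cases h : i = 0 <;> simp [h, ht]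
  · intro i; by_cases h : i = 0 <;> simp [h, hg₁, hg₂]
  · have h2 : (2 : ℕ) = 1 + 1 := rfl
    rw [h2, Jiter_succ, Jiter_succ]
    show JL hN J g₂ (flow M V 0 (JL hN J g₁ (flow M V t (Jiter hN M V J _ _ ψ 0)))) = _
    show JL hN J g₂ (flow M V 0 (JL hN J g₁ (flow M V t ψ))) = _
    rw [flow_zero]
    exact JL_JL hN J g₁ g₂ (flow M V t ψ) v hJv

/-- The state after `r` additive-kick macro steps. -/
noncomputable def stSeq (t c : ℕ → ℝ) (ψ : Phase N d) : ℕ → Phase N d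
  | 0 => ψ
  | r + 1 => flow M V (t r) (stSeq t c ψ r) + c r • unitPhase hN hd

include hJsphere hJlevel in
lemma reach_stSeq (t c : ℕ → ℝ) (htnn : ∀ i, 0 ≤ t i) (ψ : Phase N d) (r : ℕ) :
    Reach hN M V J Oξ (2 * r) ψ (stSeq hN hd M V t c ψ r) := by
  induction r with
  | zero =>
      exact ⟨fun _ => 0, fun _ => Classical.choose (hJlevel 0 0 le_rfl), fun _ => le_rfl,
        fun _ => (Classical.choose_spec (hJlevel 0 0 le_rfl)).1, rfl⟩
  | succ r ih =>
      have h2 : 2 * (r + 1) = 2 * r + 2 := by ring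
      rw [h2]
      refine ih.trans ?_
      have := reach_two hN M V J Oξ hJsphere hJlevel (stSeq hN hd M V t c ψ r)
        (mom1 hN (flow M V (t r) (stSeq hN hd M V t c ψ r)) + c r • unitd hd) (t r) (htnn r)
      rwa [setP1_mom1_add] at this

lemma stSeq_closed (t c : ℕ → ℝ) (ψ : Phase N d) (r : ℕ) (u : ℝ) :
    flow M V u (stSeq hN hd M V t c ψ r) =
      flow M V (u + ∑ j ∈ Finset.range r, t j) ψ +
        ∑ i ∈ Finset.range r, c i • flow M V (u + ∑ j ∈ Finset.Ico (i+1) r, t j)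
          (unitPhase hN hd) := by
  induction r generalizing u with
  | zero => simp [stSeq]
  | succ r ih =>
      show flow M V u (flow M V (t r) (stSeq hN hd M V t c ψ r) + c r • unitPhase hN hd) = _
      rw [flow_add_smul, flow_flow, ih (u + t r)]
      rw [Finset.sum_range_succ (f := fun i => c i • flow M V
        (u + ∑ j ∈ Finset.Ico (i+1) (r+1), t j) (unitPhase hN hd))]
      rw [Finset.sum_range_succ (f := t)]
      have e1 : u + t r + ∑ j ∈ Finset.range r, t j = u + (∑ j ∈ Finset.range r, t j + t r) := by
        ring
      rw [e1]
      have e2 : ∀ i ∈ Finset.range r,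
          c i • flow M V (u + t r + ∑ j ∈ Finset.Ico (i+1) r, t j) (unitPhase hN hd) =
          c i • flow M V (u + ∑ j ∈ Finset.Ico (i+1) (r+1), t j) (unitPhase hN hd) := by
        intro i hi
        rw [Finset.mem_range] at hi
        rw [Finset.sum_Ico_succ_top (by omega : i + 1 ≤ r)]
        ring_nf
      rw [Finset.sum_congr rfl e2]
      have e3 : u + ∑ j ∈ Finset.Ico (r+1) (r+1), t j = u := by simp
      rw [e3]
      abel
end Main

end SC

/-- Strong controllability: under Condition 2 on `J`, completeness of `V` and rational
independence of the square-root eigenvalues of `V`, there is an `m ≥ 1` such that from every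
`ψ ∈ L` the reachable set in `m` collisions is all of `L`. -/
theorem strong_controllability (N d l : ℕ) (hN : 0 < N) (hd : 0 < d) (hl : 0 < l)
    (M : ℝ) (hM : 0 < M)
    (V : Matrix (PIdx N d) (PIdx N d) ℝ) (hV : V.PosDef)
    (hcompl : Submodule.span ℝ
        (Set.range fun k : ℕ =>
          (V ^ k).mulVec (Pi.single ((⟨0, hN⟩ : Fin N), (⟨0, hd⟩ : Fin d)) 1)) = ⊤)
    (hratindep : LinearIndependent ℚ fun i : PIdx N d => Real.sqrt (hV.1.eigenvalues i))
    (Oξ : Set (Fin l → ℝ)) (hOξ : IsOpen Oξ)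
    (J : (Fin l → ℝ) → (Fin d → ℝ) → (Fin d → ℝ))
    (hJdiff : Differentiable ℝ fun y : (Fin l → ℝ) × (Fin d → ℝ) => J y.1 y.2)
    (hJanalytic : ∀ᵐ x ∂(volume : Measure ((Fin l → ℝ) × (Fin d → ℝ))),
        x.1 ∈ Oξ → AnalyticAt ℝ (fun y : (Fin l → ℝ) × (Fin d → ℝ) => J y.1 y.2) x)
    (hJsphere : ∀ p x : Fin d → ℝ, (∑ j, x j ^ 2) = (∑ j, p j ^ 2) → ∃ g ∈ Oξ, J g p = x)
    (hJlevel : ∀ p : Fin d → ℝ, ∀ h : ℝ, 0 ≤ h →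
        ∃ g ∈ Oξ, (∑ j, J g p j ^ 2) = h ^ 2)
    (ρξ : (Fin l → ℝ) → ℝ) (hρξmeas : Measurable ρξ)
    (hρξpos : ∀ y ∈ Oξ, 0 < ρξ y) (hρξzero : ∀ y ∉ Oξ, ρξ y = 0)
    (hρξint : ∫ y, ρξ y = 1)
    (K : Set (Fin d → ℝ)) (hK : IsCompact K) (α : ℝ) (hα0 : 0 < α) (hα1 : α < 1)
    (hJdrift : ∀ p ∉ K, ∫ y, (∑ j, J y p j ^ 2) * ρξ y ≤ α * ∑ j, p j ^ 2) :
    ∃ m : ℕ, 1 ≤ m ∧ ∀ ψ φ : Phase N d, ∃ (ts : ℕ → ℝ) (us : ℕ → Fin l → ℝ),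
      (∀ i, 0 ≤ ts i) ∧ (∀ i, us i ∈ Oξ) ∧ Jiter hN M V J ts us ψ m = φ := by
  classical
  -- the controllable directions
  have hkal := SC.kalman hN hd M hM V hcompl
  have hflowspan := SC.flow_span_top M V (SC.unitPhase hN hd) hkal
  obtain ⟨n, v, hvmem, hvspan⟩ := SC.exists_fin_span hflowspan
  choose τ hτnn hτ using hvmem
  -- sort the times in decreasing order
  let s : Fin n → ℝ := fun i => τ (Tuple.sort τ i.rev)
  have hs_anti : ∀ i j : Fin n, i ≤ j → s j ≤ s i := by
    intro i j hij
    exact Tuple.monotone_sort τ (Fin.rev_le_rev.mpr hij)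
  have hs_nn : ∀ i, 0 ≤ s i := fun i => hτnn _
  have hw : ∀ i : Fin n, SC.flow M V (s i) (SC.unitPhase hN hd) = v (Tuple.sort τ i.rev) :=
    fun i => (hτ (Tuple.sort τ i.rev)).symm
  have hwspan : Submodule.span ℝ
      (Set.range fun i : Fin n => SC.flow M V (s i) (SC.unitPhase hN hd)) = ⊤ := by
    have : (Set.range fun i : Fin n => SC.flow M V (s i) (SC.unitPhase hN hd)) =
        Set.range v := by
      apply Set.Subset.antisymm
      · rintro x ⟨i, rfl⟩; exact ⟨_, (hw i).symm⟩
      · rintro x ⟨i, rfl⟩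
        refine ⟨((Tuple.sort τ).symm i).rev, ?_⟩
        have h := hw ((Tuple.sort τ).symm i).rev
        rw [Fin.rev_rev, Equiv.apply_symm_apply] at h
        exact h
    rw [this, hvspan]
  -- nonnegative time increments realizing the sorted times
  let G : ℕ → ℝ := fun j => if h : j < n then s ⟨j, h⟩ else 0
  have hG_anti : ∀ j k : ℕ, j ≤ k → G k ≤ G j := by
    intro j k hjk
    by_cases hj : j < n
    · by_cases hk : k < n
      · simp only [G, dif_pos hj, dif_pos hk]
        exact hs_anti ⟨j, hj⟩ ⟨k, hk⟩ hjk
      · simp only [G, dif_pos hj, dif_neg hk]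
        exact hs_nn _
    · have hk : ¬ k < n := by omega
      simp [G, dif_neg hj, dif_neg hk]
  have hG_nn : ∀ j, 0 ≤ G j := by
    intro j
    by_cases hj : j < n
    · simp only [G, dif_pos hj]; exact hs_nn _
    · simp [G, dif_neg hj]
  let t : ℕ → ℝ := fun j => G (j - 1) - G j
  have ht_nn : ∀ j, 0 ≤ t j := fun j => sub_nonneg.mpr (hG_anti (j-1) j (by omega))
  set u : ℝ := G (n - 1) with hu
  have hu_nn : 0 ≤ u := hG_nn _
  refine ⟨2 * n + 2, by omega, ?_⟩
  intro ψ φ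
  -- solve for the kick strengths
  set T : ℝ := u + ∑ j ∈ Finset.range n, t j with hT
  have hmem : φ - SC.flow M V T ψ ∈ Submodule.span ℝ
      (Set.range fun i : Fin n => SC.flow M V (s i) (SC.unitPhase hN hd)) := by
    rw [hwspan]; trivial
  rw [Submodule.mem_span_range_iff_exists_fun ℝ] at hmem
  obtain ⟨cf, hcf⟩ := hmem
  let c : ℕ → ℝ := fun j => if h : j < n then cf ⟨j, h⟩ else 0
  -- the final state of the kick sequence
  have hfinal : SC.flow M V u (SC.stSeq hN hd M V t c ψ n) = φ := by
    rw [SC.stSeq_closed]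
    have hexp : ∀ i ∈ Finset.range n,
        c i • SC.flow M V (u + ∑ j ∈ Finset.Ico (i+1) n, t j) (SC.unitPhase hN hd) =
        c i • SC.flow M V (G i) (SC.unitPhase hN hd) := by
      intro i hi
      rw [Finset.mem_range] at hi
      rcases Nat.eq_or_lt_of_le (Nat.succ_le_of_lt hi) with h | h
      · have : Finset.Ico (i+1) n = ∅ := Finset.Ico_eq_empty (by omega)
        rw [this]
        simp only [Finset.sum_empty, add_zero]
        have : u = G i := by rw [hu]; congr 1; omega
        rw [this]
      · have htel : ∑ j ∈ Finset.Ico (i+1) n, t j = G i - G (n-1) := by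
          have h3 := SC.teleG G n (i+1) (by omega) (by omega)
          have h4 : (i + 1 - 1 : ℕ) = i := by omega
          rw [h4] at h3
          exact h3
        rw [htel, hu]
        ring_nf
    rw [Finset.sum_congr rfl hexp]
    have hsum : ∑ i ∈ Finset.range n, c i • SC.flow M V (G i) (SC.unitPhase hN hd) =
        ∑ i : Fin n, cf i • SC.flow M V (s i) (SC.unitPhase hN hd) := by
      rw [Finset.sum_range (f := fun i => c i • SC.flow M V (G i) (SC.unitPhase hN hd))]
      apply Finset.sum_congr rfl
      intro i _
      have h1 : c (i : ℕ) = cf i := by simp only [c, dif_pos i.isLt]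
      have h2 : G (i : ℕ) = s i := by simp only [G, dif_pos i.isLt]
      rw [h1, h2]
    rw [hsum, hcf, ← hT]
    abel
  -- assemble
  have hreach : SC.Reach hN M V J Oξ (2 * n + 2) ψ φ := by
    refine (SC.reach_stSeq hN hd M V J Oξ hJsphere hJlevel t c ht_nn ψ n).trans ?_
    have h2 := SC.reach_two hN M V J Oξ hJsphere hJlevel (SC.stSeq hN hd M V t c ψ n)
      (mom1 hN φ) u hu_nn
    rwa [hfinal, SC.setP1_mom1_self] at h2
  exact hreach
end

section
/- The set H^+ of symmetric positive definite n×n matrices with the completeness property is open and everywhere dense in the set H of all symmetric positive definite n×n matrices, and the complement H ∖ H^+ has Lebesgue measure zero. -/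
open MeasureTheory Matrix

/-- The index set for the independent entries of a symmetric `n×n` matrix; the coordinate space
`SymIdx n → ℝ` is the `n(n+1)/2`-dimensional space of symmetric matrices with its Lebesgue
measure. -/
abbrev SymIdx (n : ℕ) := {p : Fin n × Fin n // p.1 ≤ p.2}

/-- The symmetric matrix with the given upper-triangular entries. -/
def toMat {n : ℕ} (x : SymIdx n → ℝ) : Matrix (Fin n) (Fin n) ℝ := fun i j =>
  if h : i ≤ j then x ⟨(i, j), h⟩ else x ⟨(j, i), le_of_not_ge h⟩

/-- `H`: the set of (coordinates of) symmetric positive definite matrices. -/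
def Hset (n : ℕ) : Set (SymIdx n → ℝ) := {x | (toMat x).PosDef}

/-- The completeness property: the vectors `V^k e₁`, `k ≥ 0`, span all of `ℝ^n`. -/
def CompleteProp {n : ℕ} (hn : 0 < n) (x : SymIdx n → ℝ) : Prop :=
  Submodule.span ℝ
    (Set.range fun k : ℕ => ((toMat x) ^ k).mulVec (Pi.single (⟨0, hn⟩ : Fin n) 1)) = ⊤

/-- `H^{+}`: symmetric positive definite matrices with the completeness property. -/
def Hp {n : ℕ} (hn : 0 < n) : Set (SymIdx n → ℝ) :=
  {x | (toMat x).PosDef ∧ CompleteProp hn x}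



/-- continuity of multivariate polynomial evaluation -/
lemma continuous_mv_eval {σ : Type*} (p : MvPolynomial σ ℝ) :
    Continuous fun x : σ → ℝ => MvPolynomial.eval x p := by
  induction p using MvPolynomial.induction_on with
  | C a => simpa using continuous_const
  | add p q hp hq => simp only [map_add]; exact hp.add hq
  | mul_X p i hp => simp only [map_mul, MvPolynomial.eval_X]; exact hp.mul (continuous_apply i)

lemma mv_null_fin : ∀ (d : ℕ) (p : MvPolynomial (Fin d) ℝ), p ≠ 0 →
    volume {x : Fin d → ℝ | MvPolynomial.eval x p = 0} = 0 := by
  intro d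
  induction d with
  | zero =>
    intro p hp
    obtain ⟨a, rfl⟩ := MvPolynomial.C_surjective (Fin 0) p
    have ha : a ≠ 0 := fun h => hp (by rw [h, map_zero])
    convert measure_empty (μ := (volume : Measure (Fin 0 → ℝ)))
    ext x
    simp [ha]
  | succ d ih =>
    intro p hp
    set q : Polynomial (MvPolynomial (Fin d) ℝ) := MvPolynomial.finSuccEquiv ℝ d p with hqdef
    have hq0 : q ≠ 0 := by
      intro h
      apply hp
      have := congrArg (MvPolynomial.finSuccEquiv ℝ d).symm (hqdef ▸ h)
      simpa using this
    obtain ⟨k0, hk0⟩ : ∃ k, q.coeff k ≠ 0 := by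
      by_contra h
      push_neg at h
      exact hq0 (Polynomial.ext fun k => by simp [h k])
    have hSmeas : MeasurableSet {x : Fin (d+1) → ℝ | MvPolynomial.eval x p = 0} :=
      (isClosed_singleton.preimage (continuous_mv_eval p)).measurableSet
    set e := MeasurableEquiv.piFinSuccAbove (fun _ : Fin (d+1) => ℝ) 0 with hedef
    have hmp : MeasurePreserving e.symm
        ((volume : Measure ℝ).prod (volume : Measure (Fin d → ℝ))) volume := by
      have h1 := volume_preserving_piFinSuccAbove (fun _ : Fin (d+1) => ℝ) 0
      have h2 := h1.symm e
      simpa [Measure.volume_eq_prod] using h2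
    have key : volume {x : Fin (d+1) → ℝ | MvPolynomial.eval x p = 0}
        = ((volume : Measure ℝ).prod (volume : Measure (Fin d → ℝ)))
          (e.symm ⁻¹' {x | MvPolynomial.eval x p = 0}) :=
      (hmp.measure_preimage hSmeas.nullMeasurableSet).symm
    have hpre : e.symm ⁻¹' {x | MvPolynomial.eval x p = 0}
        = {z : ℝ × (Fin d → ℝ) |
            Polynomial.eval z.1 (q.map (MvPolynomial.eval z.2)) = 0} := by
      ext ⟨y, s⟩
      have h1 : (e.symm (y, s)) = Fin.cons y s := by
        ext i
        refine Fin.cases ?_ (fun j => ?_) i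
        · simp [hedef, MeasurableEquiv.piFinSuccAbove]
        · simp [hedef, MeasurableEquiv.piFinSuccAbove]
      simp only [Set.mem_preimage, Set.mem_setOf_eq, h1]
      rw [MvPolynomial.eval_eq_eval_mv_eval']
    rw [key, hpre]
    set F : Set (ℝ × (Fin d → ℝ)) :=
      {z | Polynomial.eval z.1 (Polynomial.map (MvPolynomial.eval z.2) q) = 0} with hFdef
    have hFmeas : MeasurableSet F := by
      rw [← hpre]
      exact e.symm.measurable hSmeas
    have hswap : ((volume : Measure ℝ).prod (volume : Measure (Fin d → ℝ))) F
        = ((volume : Measure (Fin d → ℝ)).prod (volume : Measure ℝ)) (Prod.swap ⁻¹' F) := by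
      rw [← Measure.prod_swap, Measure.map_apply measurable_swap hFmeas]
    rw [hswap]
    have hswapmeas : MeasurableSet (Prod.swap ⁻¹' F) := measurable_swap hFmeas
    rw [Measure.measure_prod_null hswapmeas]
    have hB : volume {s : Fin d → ℝ | MvPolynomial.eval s (q.coeff k0) = 0} = 0 := ih _ hk0
    show ∀ᵐ s ∂(volume : Measure (Fin d → ℝ)), volume (Prod.mk s ⁻¹' (Prod.swap ⁻¹' F)) = 0
    rw [ae_iff]
    refine measure_mono_null ?_ hB
    intro s hs
    simp only [Set.mem_setOf_eq] at hs ⊢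
    by_contra hcs
    apply hs
    have hmap : q.map (MvPolynomial.eval s) ≠ 0 := by
      intro h
      apply hcs
      have := congrArg (fun r => Polynomial.coeff r k0) h
      simpa [Polynomial.coeff_map] using this
    have hsec : (Prod.mk s ⁻¹' (Prod.swap ⁻¹' F))
        = {y : ℝ | (q.map (MvPolynomial.eval s)).IsRoot y} := rfl
    rw [hsec]
    exact Set.Finite.measure_zero (Polynomial.finite_setOf_isRoot hmap) _

lemma mv_null {ι : Type*} [Fintype ι] (p : MvPolynomial ι ℝ) (hp : p ≠ 0) :
    volume {x : ι → ℝ | MvPolynomial.eval x p = 0} = 0 := by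
  set e := (Fintype.equivFin ι).symm with hedef
  set T := MeasurableEquiv.piCongrLeft (fun _ : ι => ℝ) e with hTdef
  have hmp : MeasurePreserving T volume volume :=
    measurePreserving_piCongrLeft (fun _ : ι => (volume : Measure ℝ)) e
  have hmeas : MeasurableSet {x : ι → ℝ | MvPolynomial.eval x p = 0} :=
    (isClosed_singleton.preimage (continuous_mv_eval p)).measurableSet
  rw [← hmp.measure_preimage hmeas.nullMeasurableSet]
  have hT : ∀ (x : Fin (Fintype.card ι) → ℝ) (i : ι), T x i = x (e.symm i) := by
    intro x i
    conv_lhs => rw [← e.apply_symm_apply i]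
    exact Equiv.piCongrLeft_apply_apply (fun _ : ι => ℝ) e x (e.symm i)
  have hset : T ⁻¹' {x : ι → ℝ | MvPolynomial.eval x p = 0}
      = {x : Fin (Fintype.card ι) → ℝ |
          MvPolynomial.eval x (MvPolynomial.rename e.symm p) = 0} := by
    ext x
    have hx : T x = x ∘ e.symm := funext fun i => hT x i
    simp only [Set.mem_preimage, Set.mem_setOf_eq, MvPolynomial.eval_rename, hx]
  rw [hset]
  refine mv_null_fin _ _ ?_
  intro h
  exact hp (MvPolynomial.rename_injective _ e.symm.injective (by simpa using h))

/-- The Krylov matrix whose columns are `V^k e₁`, `k = 0, …, n-1`. -/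
def KMat {n : ℕ} (hn : 0 < n) (x : SymIdx n → ℝ) : Matrix (Fin n) (Fin n) ℝ :=
  Matrix.of fun i k : Fin n => ((toMat x) ^ (k : ℕ)) i ⟨0, hn⟩

def detK {n : ℕ} (hn : 0 < n) (x : SymIdx n → ℝ) : ℝ := (KMat hn x).det

lemma sum_mulVec {n : ℕ} {ι : Type*} [DecidableEq ι] (s : Finset ι) (A : ι → Matrix (Fin n) (Fin n) ℝ)
    (v : Fin n → ℝ) : (∑ j ∈ s, A j) *ᵥ v = ∑ j ∈ s, (A j *ᵥ v) := by
  induction s using Finset.induction_on with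
  | empty => simp [Matrix.zero_mulVec]
  | insert a s h ih => rw [Finset.sum_insert h, Finset.sum_insert h, Matrix.add_mulVec, ih]

lemma mulVec_eq_sum_col {n : ℕ} (M : Matrix (Fin n) (Fin n) ℝ) (c : Fin n → ℝ) :
    M *ᵥ c = ∑ k : Fin n, c k • (fun i => M i k) := by
  ext i
  simp [Matrix.mulVec, dotProduct, Finset.sum_apply, mul_comm]

lemma single_eq_col {n : ℕ} (hn : 0 < n) (x : SymIdx n → ℝ) (k : ℕ) :
    ((toMat x) ^ k) *ᵥ (Pi.single (⟨0, hn⟩ : Fin n) 1) =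
      fun i => ((toMat x) ^ k) i ⟨0, hn⟩ := by
  rw [Matrix.mulVec_single]
  simp
  rfl

lemma complete_iff {n : ℕ} (hn : 0 < n) (x : SymIdx n → ℝ) :
    CompleteProp hn x ↔ detK hn x ≠ 0 := by
  set V := toMat x with hV
  set b : Fin n → ℝ := Pi.single (⟨0, hn⟩ : Fin n) 1 with hb
  set u : ℕ → (Fin n → ℝ) := fun k => (V ^ k) *ᵥ b with hu
  set W : Submodule ℝ (Fin n → ℝ) :=
    Submodule.span ℝ (Set.range fun k : Fin n => u (k : ℕ)) with hW
  have hcol : ∀ k : Fin n, u (k : ℕ) = fun i => KMat hn x i k := fun k => single_eq_col hn x _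
  constructor
  · -- completeness → det ≠ 0
    intro hc hd
    -- Cayley–Hamilton: every u k lies in W
    have hCH : V ^ n = -(∑ j ∈ Finset.range n, V.charpoly.coeff j • V ^ j) := by
      have h0 := Matrix.aeval_self_charpoly V
      rw [Polynomial.aeval_eq_sum_range, Matrix.charpoly_natDegree_eq_dim,
        Fintype.card_fin, Finset.sum_range_succ] at h0
      have hmonic : V.charpoly.coeff n = 1 := by
        have := (Matrix.charpoly_monic V).coeff_natDegree
        rwa [Matrix.charpoly_natDegree_eq_dim, Fintype.card_fin] at this
      rw [hmonic, one_smul] at h0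
      exact eq_neg_of_add_eq_zero_right h0
    have hmem : ∀ k : ℕ, u k ∈ W := by
      intro k
      induction k using Nat.strong_induction_on with
      | _ k ih =>
        by_cases hk : k < n
        · exact Submodule.subset_span ⟨⟨k, hk⟩, rfl⟩
        · push_neg at hk
          have hks : k = (k - n) + n := (Nat.sub_add_cancel hk).symm
          have hpow : V ^ k = -(∑ j ∈ Finset.range n,
              V.charpoly.coeff j • V ^ ((k - n) + j)) := by
            conv_lhs => rw [hks, pow_add, hCH]
            rw [mul_neg, Finset.mul_sum]
            congr 1
            refine Finset.sum_congr rfl fun j _ => ?_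
            rw [Matrix.mul_smul, ← pow_add]
          have : u k = -(∑ j ∈ Finset.range n,
              V.charpoly.coeff j • u ((k - n) + j)) := by
            rw [hu]
            simp only
            rw [hpow, Matrix.neg_mulVec, _root_.sum_mulVec]
            congr 1
            exact Finset.sum_congr rfl fun j _ => Matrix.smul_mulVec _ _ _
          rw [this]
          refine Submodule.neg_mem _ (Submodule.sum_mem _ fun j hj => ?_)
          refine Submodule.smul_mem _ _ (ih _ ?_)
          have hjn : j < n := Finset.mem_range.1 hj
          omega
    -- linear independence of the first n Krylov vectors
    have htop : ⊤ ≤ W := by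
      rw [← hc]
      refine Submodule.span_le.2 ?_
      rintro _ ⟨k, rfl⟩
      exact hmem k
    have hli : LinearIndependent ℝ (fun k : Fin n => u (k : ℕ)) :=
      linearIndependent_of_top_le_span_of_card_eq_finrank htop
        (by simp [Module.finrank_pi])
    -- but det = 0 gives a dependence
    obtain ⟨c, hc0, hcc⟩ := (Matrix.exists_mulVec_eq_zero_iff).2 hd
    have hdep : ∑ k : Fin n, c k • u (k : ℕ) = 0 := by
      rw [← hcc, mulVec_eq_sum_col]
      exact Finset.sum_congr rfl fun k _ => by rw [hcol k]
    have := Fintype.linearIndependent_iff.1 hli c hdep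
    exact hc0 (funext fun k => this k)
  · -- det ≠ 0 → completeness
    intro hd
    rw [CompleteProp]
    refine top_unique ?_
    intro v _
    have hK := Matrix.mul_nonsing_inv (KMat hn x) (isUnit_iff_ne_zero.2 hd)
    have hv : v = (KMat hn x) *ᵥ ((KMat hn x)⁻¹ *ᵥ v) := by
      rw [Matrix.mulVec_mulVec, hK, Matrix.one_mulVec]
    rw [hv, mulVec_eq_sum_col]
    refine Submodule.sum_mem _ fun k _ => Submodule.smul_mem _ _ (Submodule.subset_span ?_)
    exact ⟨(k : ℕ), hcol k⟩

lemma toMat_symm {n : ℕ} (x : SymIdx n → ℝ) (i j : Fin n) : toMat x j i = toMat x i j := by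
  unfold toMat
  by_cases h1 : i ≤ j <;> by_cases h2 : j ≤ i
  · have := le_antisymm h1 h2
    subst this
    simp
  · simp [h1, h2]
  · simp [h1, h2]
  · exact absurd (le_of_not_ge h1) h2

lemma toMat_isHermitian {n : ℕ} (x : SymIdx n → ℝ) : (toMat x).IsHermitian := by
  ext i j
  simp only [Matrix.conjTranspose_apply, star_trivial]
  exact toMat_symm x i j

lemma continuous_toMat_entry {n : ℕ} (i j : Fin n) :
    Continuous fun x : SymIdx n → ℝ => toMat x i j := by
  unfold toMat
  split_ifs with h
  · exact continuous_apply _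
  · exact continuous_apply _

/-- The quadratic form as an explicit finite sum. -/
lemma quad_eq {n : ℕ} (x : SymIdx n → ℝ) (v : Fin n → ℝ) :
    dotProduct (star v) ((toMat x) *ᵥ v)
      = ∑ i : Fin n, v i * ∑ j : Fin n, toMat x i j * v j := by
  simp [dotProduct, Matrix.mulVec]

lemma quad_smul {n : ℕ} (x : SymIdx n → ℝ) (c : ℝ) (v : Fin n → ℝ) :
    (∑ i : Fin n, (c • v) i * ∑ j : Fin n, toMat x i j * (c • v) j)
      = c ^ 2 * ∑ i : Fin n, v i * ∑ j : Fin n, toMat x i j * v j := by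
  rw [Finset.mul_sum]
  refine Finset.sum_congr rfl fun i _ => ?_
  have : ∀ j, toMat x i j * (c • v) j = c * (toMat x i j * v j) := fun j => by
    simp only [Pi.smul_apply, smul_eq_mul]; ring
  simp only [this, Pi.smul_apply, smul_eq_mul]
  have hsum : ∑ j : Fin n, toMat x i j * (c * v j) = c * ∑ j : Fin n, toMat x i j * v j := by
    rw [Finset.mul_sum]
    exact Finset.sum_congr rfl fun j _ => by ring
  rw [hsum]
  ring

lemma isOpen_Hset (n : ℕ) : IsOpen (Hset n) := by
  rw [isOpen_iff_mem_nhds]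
  intro x hx
  set S : Set (Fin n → ℝ) := Metric.sphere 0 1 with hSdef
  have hScomp : IsCompact S := isCompact_sphere 0 1
  set F : (SymIdx n → ℝ) × (Fin n → ℝ) → ℝ :=
    fun z => ∑ i : Fin n, z.2 i * ∑ j : Fin n, toMat z.1 i j * z.2 j with hFdef
  have hFcont : Continuous F := by
    refine continuous_finset_sum _ fun i _ => Continuous.mul ?_ ?_
    · exact (continuous_apply i).comp continuous_snd
    · refine continuous_finset_sum _ fun j _ => Continuous.mul ?_ ?_
      · exact (continuous_toMat_entry i j).comp continuous_fst
      · exact (continuous_apply j).comp continuous_snd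
  have hO : IsOpen (F ⁻¹' Set.Ioi (0 : ℝ)) := isOpen_Ioi.preimage hFcont
  have hsub : ({x} : Set (SymIdx n → ℝ)) ×ˢ S ⊆ F ⁻¹' Set.Ioi 0 := by
    rintro ⟨x', v⟩ ⟨hx', hv⟩
    simp only [Set.mem_singleton_iff] at hx'
    subst hx'
    have hv1 : ‖v‖ = 1 := by
      have := mem_sphere_zero_iff_norm.1 hv
      exact this
    have hvne : v ≠ 0 := by
      intro h
      rw [h, norm_zero] at hv1
      norm_num at hv1
    have := hx.dotProduct_mulVec_pos hvne
    rw [quad_eq] at this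
    exact this
  obtain ⟨U, V', hU, _, hxU, hSV, hUV⟩ :=
    generalized_tube_lemma isCompact_singleton hScomp hO hsub
  refine Filter.mem_of_superset (hU.mem_nhds (hxU rfl)) ?_
  intro x' hx'
  refine posDef_iff_dotProduct_mulVec.2 ⟨toMat_isHermitian x', fun ⦃v⦄ hv => ?_⟩
  have hnv : ‖v‖ ≠ 0 := norm_ne_zero_iff.2 hv
  set w : Fin n → ℝ := ‖v‖⁻¹ • v with hwdef
  have hwS : w ∈ S := by
    simp [hSdef, hwdef, norm_smul, abs_of_nonneg (inv_nonneg.2 (norm_nonneg v)),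
      inv_mul_cancel₀ hnv]
  have hFw : 0 < F (x', w) := hUV ⟨hx', hSV hwS⟩
  have hvw : v = ‖v‖ • w := by
    rw [hwdef, smul_smul, mul_inv_cancel₀ hnv, one_smul]
  rw [quad_eq]
  calc (0:ℝ) < ‖v‖ ^ 2 * F (x', w) := by positivity
  _ = ∑ i : Fin n, v i * ∑ j : Fin n, toMat x' i j * v j := by
      rw [hFdef]
      simp only
      rw [← quad_smul x' ‖v‖ w, ← hvw]

/-- entrywise polynomial matrix -/
noncomputable def Mpoly (n : ℕ) : Matrix (Fin n) (Fin n) (MvPolynomial (SymIdx n) ℝ) := fun i j =>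
  if h : i ≤ j then MvPolynomial.X ⟨(i, j), h⟩ else MvPolynomial.X ⟨(j, i), le_of_not_ge h⟩

/-- the Krylov determinant as a polynomial -/
noncomputable def Ppoly {n : ℕ} (hn : 0 < n) : MvPolynomial (SymIdx n) ℝ :=
  (Matrix.of fun i k : Fin n => ((Mpoly n) ^ (k : ℕ)) i ⟨0, hn⟩).det

lemma eval_Ppoly {n : ℕ} (hn : 0 < n) (x : SymIdx n → ℝ) :
    MvPolynomial.eval x (Ppoly hn) = detK hn x := by
  rw [Ppoly, detK, RingHom.map_det]
  congr 1
  ext i k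
  simp only [RingHom.mapMatrix_apply, Matrix.map_apply, Matrix.of_apply]
  have hmap : (Mpoly n).map (MvPolynomial.eval x) = toMat x := by
    ext i j
    rw [Matrix.map_apply]
    unfold Mpoly toMat
    split_ifs <;> simp
  have hpow : ((Mpoly n) ^ (k : ℕ)).map (MvPolynomial.eval x) = (toMat x) ^ (k : ℕ) := by
    rw [← hmap]
    have := map_pow ((MvPolynomial.eval x).mapMatrix) (Mpoly n) (k : ℕ)
    simpa [RingHom.mapMatrix_apply] using this
  show (((Mpoly n) ^ (k : ℕ)).map (MvPolynomial.eval x)) i ⟨0, hn⟩ = _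
  rw [hpow]
  rfl

lemma continuous_detK {n : ℕ} (hn : 0 < n) : Continuous (detK hn) := by
  have hpow : ∀ k : ℕ, Continuous fun x : SymIdx n → ℝ => (toMat x) ^ k := by
    intro k
    induction k with
    | zero => simpa using continuous_const
    | succ k ih =>
      simp only [pow_succ]
      exact ih.matrix_mul (continuous_matrix fun i j => continuous_toMat_entry i j)
  show Continuous fun x => (KMat hn x).det
  refine Continuous.matrix_det (continuous_matrix fun i k => ?_)
  show Continuous fun x : SymIdx n → ℝ => ((toMat x) ^ (k : ℕ)) i ⟨0, hn⟩
  exact (continuous_apply _).comp ((continuous_apply i).comp (hpow (k : ℕ)))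

/-- witness: symmetric shift (Jacobi) matrix -/
def xw (n : ℕ) : SymIdx n → ℝ := fun p => if (p.1.2 : ℕ) = (p.1.1 : ℕ) + 1 then 1 else 0

lemma toMat_xw {n : ℕ} (i j : Fin n) :
    toMat (xw n) i j = (if (j : ℕ) = (i : ℕ) + 1 then (1 : ℝ) else 0)
      + (if (i : ℕ) = (j : ℕ) + 1 then (1 : ℝ) else 0) := by
  unfold toMat xw
  by_cases h : i ≤ j
  · rw [dif_pos h]
    have h' : (i : ℕ) ≤ (j : ℕ) := h
    have : ¬ (i : ℕ) = (j : ℕ) + 1 := by omega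
    simp [this]
  · rw [dif_neg h]
    have h' : (j : ℕ) < (i : ℕ) := lt_of_not_ge h
    have : ¬ (j : ℕ) = (i : ℕ) + 1 := by omega
    simp [this]

lemma sum_if_eq {n : ℕ} (w : Fin n → ℝ) (m : ℕ) :
    ∑ j : Fin n, (if (j : ℕ) = m then (1 : ℝ) else 0) * w j
      = if h : m < n then w ⟨m, h⟩ else 0 := by
  split_ifs with h
  · rw [Finset.sum_eq_single (⟨m, h⟩ : Fin n)]
    · simp
    · intro j _ hj
      have : ¬ (j : ℕ) = m := fun hc => hj (Fin.ext hc)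
      simp [this]
    · simp
  · apply Finset.sum_eq_zero
    intro j _
    have hj := j.isLt
    have : ¬ (j : ℕ) = m := by omega
    simp [this]

lemma pow_entry {n : ℕ} (hn : 0 < n) : ∀ k : ℕ, ∀ i : Fin n,
    ((i : ℕ) = k → ((toMat (xw n)) ^ k) i ⟨0, hn⟩ = 1) ∧
    (k < (i : ℕ) → ((toMat (xw n)) ^ k) i ⟨0, hn⟩ = 0) := by
  intro k
  induction k with
  | zero =>
    intro i
    constructor
    · intro hi
      have : i = ⟨0, hn⟩ := Fin.ext (by simpa using hi)
      rw [pow_zero, this, Matrix.one_apply_eq]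
    · intro hi
      rw [pow_zero, Matrix.one_apply_ne]
      intro hc
      rw [hc] at hi
      simp at hi
  | succ k ih =>
    intro i
    have hrec : ((toMat (xw n)) ^ (k + 1)) i ⟨0, hn⟩
        = ∑ j : Fin n, toMat (xw n) i j * ((toMat (xw n)) ^ k) j ⟨0, hn⟩ := by
      rw [pow_succ', Matrix.mul_apply]
    have hsplit : ∑ j : Fin n, toMat (xw n) i j * ((toMat (xw n)) ^ k) j ⟨0, hn⟩
        = (∑ j : Fin n, (if (j : ℕ) = (i : ℕ) + 1 then (1:ℝ) else 0)
            * ((toMat (xw n)) ^ k) j ⟨0, hn⟩)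
          + (∑ j : Fin n, (if (i : ℕ) = (j : ℕ) + 1 then (1:ℝ) else 0)
            * ((toMat (xw n)) ^ k) j ⟨0, hn⟩) := by
      rw [← Finset.sum_add_distrib]
      exact Finset.sum_congr rfl fun j _ => by rw [toMat_xw, add_mul]
    have hin := i.isLt
    constructor
    · intro hi
      have hi1 : 1 ≤ (i : ℕ) := by omega
      have h2 : ∀ j : Fin n, (if (i : ℕ) = (j : ℕ) + 1 then (1:ℝ) else 0)
          = (if (j : ℕ) = (i : ℕ) - 1 then (1:ℝ) else 0) := fun j =>
        if_congr (by omega) rfl rfl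
      rw [hrec, hsplit]
      simp only [h2]
      rw [sum_if_eq, sum_if_eq]
      have e1 : (if h : (i : ℕ) + 1 < n then ((toMat (xw n)) ^ k) ⟨(i:ℕ)+1, h⟩ ⟨0, hn⟩ else 0)
          = 0 := by
        split_ifs with h
        · exact (ih ⟨(i:ℕ)+1, h⟩).2 (by simp; omega)
        · rfl
      have e2 : (if h : (i : ℕ) - 1 < n then ((toMat (xw n)) ^ k) ⟨(i:ℕ)-1, h⟩ ⟨0, hn⟩ else 0)
          = 1 := by
        rw [dif_pos (by omega : (i : ℕ) - 1 < n)]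
        exact (ih ⟨(i:ℕ)-1, by omega⟩).1 (by simp; omega)
      rw [e1, e2, zero_add]
    · intro hi
      have hi1 : 1 ≤ (i : ℕ) := by omega
      have h2 : ∀ j : Fin n, (if (i : ℕ) = (j : ℕ) + 1 then (1:ℝ) else 0)
          = (if (j : ℕ) = (i : ℕ) - 1 then (1:ℝ) else 0) := fun j =>
        if_congr (by omega) rfl rfl
      rw [hrec, hsplit]
      simp only [h2]
      rw [sum_if_eq, sum_if_eq]
      have e1 : (if h : (i : ℕ) + 1 < n then ((toMat (xw n)) ^ k) ⟨(i:ℕ)+1, h⟩ ⟨0, hn⟩ else 0)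
          = 0 := by
        split_ifs with h
        · exact (ih ⟨(i:ℕ)+1, h⟩).2 (by simp; omega)
        · rfl
      have e2 : (if h : (i : ℕ) - 1 < n then ((toMat (xw n)) ^ k) ⟨(i:ℕ)-1, h⟩ ⟨0, hn⟩ else 0)
          = 0 := by
        rw [dif_pos (by omega : (i : ℕ) - 1 < n)]
        exact (ih ⟨(i:ℕ)-1, by omega⟩).2 (by simp; omega)
      rw [e1, e2, zero_add]

lemma detK_xw {n : ℕ} (hn : 0 < n) : detK hn (xw n) = 1 := by
  have htri : (KMat hn (xw n)).BlockTriangular id := by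
    intro i j hij
    exact (pow_entry hn (j : ℕ) i).2 hij
  rw [detK, Matrix.det_of_upperTriangular htri]
  have hdiag : ∀ i : Fin n, KMat hn (xw n) i i = 1 := fun i => (pow_entry hn (i : ℕ) i).1 rfl
  rw [Finset.prod_congr rfl fun i _ => hdiag i]
  simp


/-- `H^{+}` is open, everywhere dense in `H`, and the complement `H ∖ H^{+}` has Lebesgue
measure zero. -/
theorem Hp_open_dense_and_complement_null (n : ℕ) (hn : 0 < n) :
    IsOpen (Hp hn) ∧ Hset n ⊆ closure (Hp hn) ∧ volume (Hset n \ Hp hn) = 0 := by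
  have hHp : Hp hn = Hset n ∩ {x | detK hn x ≠ 0} := by
    ext x
    simp only [Hp, Hset, Set.mem_setOf_eq, Set.mem_inter_iff]
    exact and_congr_right fun _ => complete_iff hn x
  have hopenD : IsOpen {x : SymIdx n → ℝ | detK hn x ≠ 0} :=
    isOpen_ne.preimage (continuous_detK hn)
  have hP0 : Ppoly hn ≠ 0 := by
    intro h
    have h1 := eval_Ppoly hn (xw n)
    rw [h, map_zero, detK_xw hn] at h1
    exact zero_ne_one h1
  have hnull : volume {x : SymIdx n → ℝ | detK hn x = 0} = 0 := by
    have hset : {x : SymIdx n → ℝ | detK hn x = 0}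
        = {x | MvPolynomial.eval x (Ppoly hn) = 0} := by
      ext x
      rw [Set.mem_setOf_eq, Set.mem_setOf_eq, eval_Ppoly]
    rw [hset]
    exact mv_null _ hP0
  have hint : interior {x : SymIdx n → ℝ | detK hn x = 0} = ∅ := by
    by_contra h
    have hpos := isOpen_interior.measure_pos (volume : Measure (SymIdx n → ℝ))
      (Set.nonempty_iff_ne_empty.2 h)
    have hle := measure_mono_null (interior_subset) hnull
    rw [hle] at hpos
    exact lt_irrefl 0 hpos
  have hdense : Dense {x : SymIdx n → ℝ | detK hn x ≠ 0} := by
    exact interior_eq_empty_iff_dense_compl.1 hint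
  refine ⟨?_, ?_, ?_⟩
  · rw [hHp]
    exact (isOpen_Hset n).inter hopenD
  · intro x hx
    have hsub := Dense.open_subset_closure_inter hdense (isOpen_Hset n)
    have h2 := hsub hx
    rwa [← hHp] at h2
  · refine measure_mono_null ?_ hnull
    rintro x ⟨hxH, hxnot⟩
    by_contra hne
    exact hxnot (hHp ▸ (⟨hxH, hne⟩ : x ∈ Hset n ∩ {x | detK hn x ≠ 0}))
end

section
/- Let V be a symmetric positive definite N×N real matrix and Λ' ⊆ {1,…,N}. If the span of {V^k e_i : i ∈ Λ', k ≥ 0} equals all of ℝ^N, then the multiplicity of every eigenvalue of V is at most |Λ'|, the cardinality of Λ'. -/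
open Matrix

/-- If the span of `{V^k e_i : i ∈ Λ', k ≥ 0}` is all of `ℝ^N`, then the multiplicity of every
eigenvalue of the symmetric positive definite matrix `V` is at most `|Λ'|`. -/
theorem eigenvalue_multiplicity_le_of_span_eq_top (N : ℕ)
    (V : Matrix (Fin N) (Fin N) ℝ) (hV : V.PosDef) (Λ' : Finset (Fin N))
    (hspan : Submodule.span ℝ
        {x : Fin N → ℝ | ∃ k : ℕ, ∃ i ∈ Λ', x = (V ^ k).mulVec (Pi.single i 1)} = ⊤)
    (μ : ℝ) :
    Module.finrank ℝ (Module.End.eigenspace (Matrix.mulVecLin V) μ) ≤ Λ'.card := by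
  classical
  set T : EuclideanSpace ℝ (Fin N) →ₗ[ℝ] EuclideanSpace ℝ (Fin N) :=
    Matrix.toEuclideanLin V with hTdef
  have hTsym : T.IsSymmetric := Matrix.isHermitian_iff_isSymmetric.1 hV.isHermitian
  set E : Submodule ℝ (EuclideanSpace ℝ (Fin N)) := Module.End.eigenspace T μ with hEdef
  set f : (Fin N → ℝ) ≃ₗ[ℝ] EuclideanSpace ℝ (Fin N) :=
    (WithLp.linearEquiv 2 ℝ (Fin N → ℝ)).symm with hfdef
  let P : EuclideanSpace ℝ (Fin N) →ₗ[ℝ] EuclideanSpace ℝ (Fin N) :=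
    E.subtype ∘ₗ (E.orthogonalProjectionOnto : EuclideanSpace ℝ (Fin N) →L[ℝ] E).toLinearMap
  have hPmem : ∀ v : E, P (v : EuclideanSpace ℝ (Fin N)) = v := by
    intro v
    simp [P, Submodule.orthogonalProjectionOnto_mem_subspace_eq_self]
  have hPT : ∀ x, P (T x) = μ • P x := by
    intro x
    have hq : x - (E.orthogonalProjectionOnto x : EuclideanSpace ℝ (Fin N)) ∈ Eᗮ :=
      E.sub_starProjection_mem_orthogonal x
    have hTq : T (x - (E.orthogonalProjectionOnto x : EuclideanSpace ℝ (Fin N))) ∈ Eᗮ := by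
      rw [Submodule.mem_orthogonal]
      intro u hu
      have hu' : T u = μ • u := Module.End.mem_eigenspace_iff.1 hu
      rw [← hTsym u, hu', inner_smul_left]
      have := (Submodule.mem_orthogonal E _).1 hq u hu
      simp only [Submodule.coe_orthogonalProjectionOnto_apply] at this
      simp [this]
    have hp : T ((E.orthogonalProjectionOnto x : EuclideanSpace ℝ (Fin N))) =
        μ • (E.orthogonalProjectionOnto x : EuclideanSpace ℝ (Fin N)) :=
      Module.End.mem_eigenspace_iff.1 (E.orthogonalProjectionOnto x).2
    have h0 : P (T (x - (E.orthogonalProjectionOnto x : EuclideanSpace ℝ (Fin N)))) = 0 := by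
      have h := Submodule.orthogonalProjectionOnto_apply_of_mem_orthogonal hTq
      simp only [P, LinearMap.coe_comp, Function.comp_apply, ContinuousLinearMap.coe_coe,
        Submodule.coe_subtype, h, Submodule.coe_zero]
    have hsum : T ((E.orthogonalProjectionOnto x : EuclideanSpace ℝ (Fin N))) +
        T (x - (E.orthogonalProjectionOnto x : EuclideanSpace ℝ (Fin N))) = T x := by
      rw [← map_add]; congr 1; abel
    calc P (T x) = P (T ((E.orthogonalProjectionOnto x : EuclideanSpace ℝ (Fin N)))) +
          P (T (x - (E.orthogonalProjectionOnto x : EuclideanSpace ℝ (Fin N)))) := by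
            rw [← map_add, hsum]
      _ = P (μ • (E.orthogonalProjectionOnto x : EuclideanSpace ℝ (Fin N))) + 0 := by rw [hp, h0]
      _ = μ • P x := by
            rw [add_zero, _root_.map_smul, hPmem]
            rfl
  have hPTk : ∀ (k : ℕ) (x), P ((T ^ k) x) = μ ^ k • P x := by
    intro k
    induction k with
    | zero => intro x; simp
    | succ k ih =>
      intro x
      rw [pow_succ, Module.End.mul_apply, ih, hPT, smul_smul, ← pow_succ]
  have hTk : ∀ (k : ℕ) (y : Fin N → ℝ), f ((V ^ k).mulVec y) = (T ^ k) (f y) := by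
    intro k
    induction k with
    | zero => intro y; simp
    | succ k ih =>
      intro y
      rw [pow_succ, ← Matrix.mulVec_mulVec, ih, pow_succ, Module.End.mul_apply]
      rfl
  have hspan' : Submodule.span ℝ
      (⇑f '' {x : Fin N → ℝ | ∃ k : ℕ, ∃ i ∈ Λ', x = (V ^ k).mulVec (Pi.single i 1)}) = ⊤ := by
    rw [← LinearEquiv.coe_coe, ← Submodule.map_span, hspan, Submodule.map_top]; exact LinearEquiv.range f
  set G : Finset (EuclideanSpace ℝ (Fin N)) :=
    Λ'.image (fun i => P (f (Pi.single i 1))) with hGdef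
  have hEle : E ≤ Submodule.span ℝ (G : Set (EuclideanSpace ℝ (Fin N))) := by
    intro v hv
    have hv1 : v ∈ Submodule.span ℝ
        (⇑f '' {x : Fin N → ℝ | ∃ k : ℕ, ∃ i ∈ Λ', x = (V ^ k).mulVec (Pi.single i 1)}) := by
      rw [hspan']; trivial
    have hv2 : P v ∈ Submodule.map P (Submodule.span ℝ
        (⇑f '' {x : Fin N → ℝ | ∃ k : ℕ, ∃ i ∈ Λ', x = (V ^ k).mulVec (Pi.single i 1)})) :=
      Submodule.mem_map_of_mem hv1
    rw [Submodule.map_span] at hv2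
    have hsub : ⇑P '' (⇑f '' {x : Fin N → ℝ | ∃ k : ℕ, ∃ i ∈ Λ', x = (V ^ k).mulVec (Pi.single i 1)}) ⊆
        ↑(Submodule.span ℝ (G : Set (EuclideanSpace ℝ (Fin N)))) := by
      rintro _ ⟨_, ⟨x, ⟨k, i, hi, rfl⟩, rfl⟩, rfl⟩
      rw [hTk, hPTk]
      exact Submodule.smul_mem _ _ (Submodule.subset_span
        (Finset.mem_coe.2 (Finset.mem_image_of_mem _ hi)))
    have hPv : P v ∈ Submodule.span ℝ (G : Set (EuclideanSpace ℝ (Fin N))) :=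
      (Submodule.span_le.2 hsub) hv2
    have hPveq : P v = v := hPmem ⟨v, hv⟩
    rwa [hPveq] at hPv
  have hmap : (Module.End.eigenspace (Matrix.mulVecLin V) μ).map (f : (Fin N → ℝ) →ₗ[ℝ] EuclideanSpace ℝ (Fin N)) = E := by
    ext x
    rw [Submodule.mem_map_equiv, hEdef, Module.End.mem_eigenspace_iff,
      Module.End.mem_eigenspace_iff]
    exact ⟨fun h => by rw [show T x = f (V.mulVecLin (f.symm x)) from rfl, h, map_smul,
      f.apply_symm_apply], fun h => by apply f.injective; rw [map_smul, f.apply_symm_apply]; exact h⟩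
  have hfr : Module.finrank ℝ (Module.End.eigenspace (Matrix.mulVecLin V) μ) =
      Module.finrank ℝ E := by
    rw [← LinearEquiv.finrank_map_eq f, hmap]
  rw [hfr]
  calc Module.finrank ℝ E ≤ Module.finrank ℝ (Submodule.span ℝ (G : Set (EuclideanSpace ℝ (Fin N)))) :=
        Submodule.finrank_mono hEle
    _ ≤ G.card := finrank_span_finset_le_card G
    _ ≤ Λ'.card := Finset.card_image_le
end
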